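/- If S₁ and S₂ are symmetric real k×k matrices with exp(S₁) = exp(S₂), then S₁ = S₂; that is, the matrix exponential is injective on the set of symmetric real matrices. -/

import Mathlib

open Matrix

/-- If `W` intertwines two diagonal matrices, it also intertwines the diagonals obtained by
applying functions that agree whenever the original entries agree. -/
lemma intertwine_diagonal {n : ℕ} (W : Matrix (Fin n) (Fin n) ℝ) (a b a' b' : Fin n → ℝ)
    (hab : ∀ i j, a j = b i → a' j = b' i)
    (h : W * diagonal a = diagonal b * W) :
    W * diagonal a' = diagonal b' * W := by
  ext i j
  have h' := congrFun (congrFun h i) j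
  rw [Matrix.mul_diagonal, Matrix.diagonal_mul] at h' ⊢
  by_cases hW : W i j = 0
  · simp [hW]
  · have hab' : a j = b i := mul_left_cancel₀ hW (h'.trans (mul_comm _ _))
    rw [hab i j hab', mul_comm]

/-- The matrix exponential is injective on symmetric real matrices. -/
theorem exp_injective_on_symm (k : ℕ) (S₁ S₂ : Matrix (Fin k) (Fin k) ℝ)
    (h₁ : S₁.IsSymm) (h₂ : S₂.IsSymm)
    (h : NormedSpace.exp S₁ = NormedSpace.exp S₂) :
    S₁ = S₂ := by
  have hH₁ : S₁.IsHermitian := by rwa [Matrix.IsHermitian, conjTranspose_eq_transpose_of_trivial]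
  have hH₂ : S₂.IsHermitian := by rwa [Matrix.IsHermitian, conjTranspose_eq_transpose_of_trivial]
  set U₁ : Matrix (Fin k) (Fin k) ℝ := (hH₁.eigenvectorUnitary : Matrix (Fin k) (Fin k) ℝ)
  set U₂ : Matrix (Fin k) (Fin k) ℝ := (hH₂.eigenvectorUnitary : Matrix (Fin k) (Fin k) ℝ)
  set d₁ := hH₁.eigenvalues
  set d₂ := hH₂.eigenvalues
  have hU₁ : U₁ ∈ Matrix.unitaryGroup (Fin k) ℝ := hH₁.eigenvectorUnitary.2
  have hU₂ : U₂ ∈ Matrix.unitaryGroup (Fin k) ℝ := hH₂.eigenvectorUnitary.2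
  have hU₁s : star U₁ * U₁ = 1 := hU₁.1
  have hU₂s : star U₂ * U₂ = 1 := hU₂.1
  have hU₁s' : U₁ * star U₁ = 1 := hU₁.2
  have hU₂s' : U₂ * star U₂ = 1 := hU₂.2
  have hS₁ : S₁ = U₁ * diagonal d₁ * star U₁ := by
    simpa [Function.comp] using hH₁.spectral_theorem
  have hS₂ : S₂ = U₂ * diagonal d₂ * star U₂ := by
    simpa [Function.comp] using hH₂.spectral_theorem
  -- units
  have hunit₁ : IsUnit U₁ := ⟨Unitary.toUnits hH₁.eigenvectorUnitary, rfl⟩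
  have hunit₂ : IsUnit U₂ := ⟨Unitary.toUnits hH₂.eigenvectorUnitary, rfl⟩
  have hinv₁ : U₁⁻¹ = star U₁ := Matrix.inv_eq_left_inv hU₁s
  have hinv₂ : U₂⁻¹ = star U₂ := Matrix.inv_eq_left_inv hU₂s
  have hexp₁ : NormedSpace.exp S₁ = U₁ * diagonal (fun i => Real.exp (d₁ i)) * star U₁ := by
    rw [hS₁, ← hinv₁, Matrix.exp_conj _ _ hunit₁, Matrix.exp_diagonal, Pi.exp_def]
    simp [← Real.exp_eq_exp_ℝ]
  have hexp₂ : NormedSpace.exp S₂ = U₂ * diagonal (fun i => Real.exp (d₂ i)) * star U₂ := by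
    rw [hS₂, ← hinv₂, Matrix.exp_conj _ _ hunit₂, Matrix.exp_diagonal, Pi.exp_def]
    simp [← Real.exp_eq_exp_ℝ]
  set W := star U₂ * U₁ with hW
  have hcomm : W * diagonal (fun i => Real.exp (d₁ i))
      = diagonal (fun i => Real.exp (d₂ i)) * W := by
    have := hexp₁.symm.trans (h.trans hexp₂)
    -- U₁ * D₁' * star U₁ = U₂ * D₂' * star U₂
    calc W * diagonal (fun i => Real.exp (d₁ i))
        = star U₂ * (U₁ * diagonal (fun i => Real.exp (d₁ i)) * star U₁) * U₁ := by
          rw [hW]; rw [Matrix.mul_assoc, Matrix.mul_assoc, Matrix.mul_assoc, hU₁s, Matrix.mul_one]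
      _ = star U₂ * (U₂ * diagonal (fun i => Real.exp (d₂ i)) * star U₂) * U₁ := by rw [this]
      _ = diagonal (fun i => Real.exp (d₂ i)) * W := by
          rw [hW, ← Matrix.mul_assoc, ← Matrix.mul_assoc, ← Matrix.mul_assoc, hU₂s,
            Matrix.one_mul, Matrix.mul_assoc]
  have hcomm' : W * diagonal d₁ = diagonal d₂ * W := by
    refine intertwine_diagonal W _ _ d₁ d₂ (fun i j hij => Real.exp_injective hij) hcomm
  have hUW : U₂ * W = U₁ := by rw [hW, ← Matrix.mul_assoc, hU₂s', Matrix.one_mul]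
  have hWs : W * star W = 1 := by
    rw [hW, StarMul.star_mul, star_star, Matrix.mul_assoc, ← Matrix.mul_assoc U₁, hU₁s',
      Matrix.one_mul, hU₂s]
  calc S₁ = U₁ * diagonal d₁ * star U₁ := hS₁
    _ = (U₂ * W) * diagonal d₁ * star (U₂ * W) := by rw [hUW]
    _ = U₂ * (W * diagonal d₁ * star W) * star U₂ := by
        rw [StarMul.star_mul]; simp only [Matrix.mul_assoc]
    _ = U₂ * (diagonal d₂ * (W * star W)) * star U₂ := by
        rw [hcomm']; simp only [Matrix.mul_assoc]
    _ = U₂ * diagonal d₂ * star U₂ := by rw [hWs, Matrix.mul_one]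
    _ = S₂ := hS₂.symm
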